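/- For every $\delta \in (0,1]$, $\ln 2 \cdot \left(1 - h_2\left(\frac{1-\delta}{2}\right)\right) > \frac{\delta^2}{2}$, where $h_2$ is the binary entropy function to base 2. Hence the refined Azuma exponent strictly improves Azuma's exponent $\delta^2/2$ for all $\delta \in (0,1]$. -/

import Mathlib

/-- Binary entropy function to base 2. -/
noncomputable def binEnt2 (x : ℝ) : ℝ := -(x * Real.logb 2 x) - (1 - x) * Real.logb 2 (1 - x)

private lemma aux_log_lb (x : ℝ) (hx : 0 < x) :
    x - x ^ 2 / 2 < Real.log (1 + x) := by
  have h : StrictMonoOn (fun y : ℝ => Real.log (1 + y) - y + y ^ 2 / 2) (Set.Ici 0) := by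
    apply strictMonoOn_of_deriv_pos (convex_Ici 0)
    · apply ContinuousOn.add
      · apply ContinuousOn.sub
        · exact Real.continuousOn_log.comp (by fun_prop)
            (fun y hy => by simp at hy ⊢; intro h; linarith)
        · exact continuousOn_id
      · fun_prop
    · intro y hy
      rw [interior_Ici] at hy
      have hy0 : (0:ℝ) < y := hy
      have h1 : HasDerivAt (fun y : ℝ => Real.log (1 + y)) (1 / (1 + y)) y := by
        have := ((hasDerivAt_id y).const_add 1).log
          (by intro h; simp only [id_eq] at h; linarith)
        simpa using this
      have h2 : HasDerivAt (fun y : ℝ => Real.log (1 + y) - y + y ^ 2 / 2)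
          (1 / (1 + y) - 1 + y) y := by
        have := (h1.sub (hasDerivAt_id y)).add ((hasDerivAt_pow 2 y).div_const 2)
        exact this.congr_deriv (by norm_num)
      rw [h2.deriv]
      have heq : 1 / (1 + y) - 1 + y = y ^ 2 / (1 + y) := by
        field_simp; ring
      rw [heq]; positivity
  have := h (Set.self_mem_Ici) (Set.mem_Ici.2 hx.le) hx
  simp at this
  linarith

private lemma aux_B (x : ℝ) (hx : 0 < x) :
    x + x ^ 2 / 2 - x ^ 3 / 6 < (1 + x) * Real.log (1 + x) := by
  have h : StrictMonoOn
      (fun y : ℝ => (1 + y) * Real.log (1 + y) - y - y ^ 2 / 2 + y ^ 3 / 6) (Set.Ici 0) := by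
    apply strictMonoOn_of_deriv_pos (convex_Ici 0)
    · apply ContinuousOn.add
      · apply ContinuousOn.sub
        · apply ContinuousOn.sub
          · apply ContinuousOn.mul (by fun_prop)
            exact Real.continuousOn_log.comp (by fun_prop)
              (fun y hy => by simp at hy ⊢; intro h; linarith)
          · exact continuousOn_id
        · fun_prop
      · fun_prop
    · intro y hy
      rw [interior_Ici] at hy
      have hy0 : (0:ℝ) < y := hy
      have hne : (1:ℝ) + y ≠ 0 := by linarith
      have h1 : HasDerivAt (fun y : ℝ => Real.log (1 + y)) (1 / (1 + y)) y := by
        have := ((hasDerivAt_id y).const_add 1).log hne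
        simpa using this
      have hmul : HasDerivAt (fun y : ℝ => (1 + y) * Real.log (1 + y))
          (Real.log (1 + y) + 1) y := by
        have := ((hasDerivAt_id y).const_add 1).mul h1
        refine this.congr_deriv ?_
        simp only [id_eq]
        field_simp
      have h2 : HasDerivAt
          (fun y : ℝ => (1 + y) * Real.log (1 + y) - y - y ^ 2 / 2 + y ^ 3 / 6)
          (Real.log (1 + y) - y + y ^ 2 / 2) y := by
        have := ((hmul.sub (hasDerivAt_id y)).sub ((hasDerivAt_pow 2 y).div_const 2)).add
          ((hasDerivAt_pow 3 y).div_const 6)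
        refine this.congr_deriv ?_
        simp
        ring
      rw [h2.deriv]
      have := aux_log_lb y hy0
      linarith
  have := h (Set.self_mem_Ici) (Set.mem_Ici.2 hx.le) hx
  simp at this
  linarith

private lemma aux_u (x : ℝ) (hx0 : 0 < x) (hx1 : x < 1) :
    x + x ^ 2 / 2 < -Real.log (1 - x) := by
  have h : StrictMonoOn (fun y : ℝ => -Real.log (1 - y) - y - y ^ 2 / 2) (Set.Ico 0 1) := by
    apply strictMonoOn_of_deriv_pos (convex_Ico 0 1)
    · apply ContinuousOn.sub
      · apply ContinuousOn.sub
        · apply ContinuousOn.neg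
          exact Real.continuousOn_log.comp (by fun_prop)
            (fun y hy => by simp at hy ⊢; intro h; linarith [hy.2])
        · exact continuousOn_id
      · fun_prop
    · intro y hy
      rw [interior_Ico] at hy
      have hne : (1:ℝ) - y ≠ 0 := by have := hy.2; intro h; linarith
      have h1 : HasDerivAt (fun y : ℝ => Real.log (1 - y)) (-1 / (1 - y)) y := by
        have := ((hasDerivAt_id y).const_sub 1).log hne
        simpa using this
      have h2 : HasDerivAt (fun y : ℝ => -Real.log (1 - y) - y - y ^ 2 / 2)
          (-(-1 / (1 - y)) - 1 - y) y := by
        have := ((h1.neg).sub (hasDerivAt_id y)).sub ((hasDerivAt_pow 2 y).div_const 2)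
        exact this.congr_deriv (by norm_num)
      rw [h2.deriv]
      have heq : -(-1 / (1 - y)) - 1 - y = y ^ 2 / (1 - y) := by
        field_simp; ring
      rw [heq]
      have := hy.1; have := hy.2
      have : (0:ℝ) < 1 - y := by linarith
      positivity
  have := h (Set.mem_Ico.2 ⟨le_refl 0, one_pos⟩) (Set.mem_Ico.2 ⟨hx0.le, hx1⟩) hx0
  simp at this
  linarith

private lemma aux_A (x : ℝ) (hx0 : 0 < x) (hx1 : x < 1) :
    -x + x ^ 2 / 2 + x ^ 3 / 6 < (1 - x) * Real.log (1 - x) := by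
  have h : StrictMonoOn
      (fun y : ℝ => (1 - y) * Real.log (1 - y) + y - y ^ 2 / 2 - y ^ 3 / 6) (Set.Ico 0 1) := by
    apply strictMonoOn_of_deriv_pos (convex_Ico 0 1)
    · apply ContinuousOn.sub
      · apply ContinuousOn.sub
        · apply ContinuousOn.add
          · apply ContinuousOn.mul (by fun_prop)
            exact Real.continuousOn_log.comp (by fun_prop)
              (fun y hy => by simp at hy ⊢; intro h; linarith [hy.2])
          · exact continuousOn_id
        · fun_prop
      · fun_prop
    · intro y hy
      rw [interior_Ico] at hy
      have hy0 := hy.1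
      have hy1 := hy.2
      have hne : (1:ℝ) - y ≠ 0 := by intro h; linarith
      have h1 : HasDerivAt (fun y : ℝ => Real.log (1 - y)) (-1 / (1 - y)) y := by
        have := ((hasDerivAt_id y).const_sub 1).log hne
        simpa using this
      have hmul : HasDerivAt (fun y : ℝ => (1 - y) * Real.log (1 - y))
          (-Real.log (1 - y) - 1) y := by
        have := ((hasDerivAt_id y).const_sub 1).mul h1
        refine this.congr_deriv ?_
        simp only [id_eq]
        field_simp
        ring
      have h2 : HasDerivAt
          (fun y : ℝ => (1 - y) * Real.log (1 - y) + y - y ^ 2 / 2 - y ^ 3 / 6)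
          (-Real.log (1 - y) - y - y ^ 2 / 2) y := by
        have := ((hmul.add (hasDerivAt_id y)).sub ((hasDerivAt_pow 2 y).div_const 2)).sub
          ((hasDerivAt_pow 3 y).div_const 6)
        refine this.congr_deriv ?_
        simp
        ring
      rw [h2.deriv]
      have := aux_u y hy0 hy1
      linarith
  have := h (Set.mem_Ico.2 ⟨le_refl 0, one_pos⟩) (Set.mem_Ico.2 ⟨hx0.le, hx1⟩) hx0
  simp at this
  linarith

/-- the refined Azuma exponent strictly improves `δ²/2` for `δ ∈ (0,1]`. -/
theorem stmt_4 (δ : ℝ) (hδ : δ ∈ Set.Ioc (0:ℝ) 1) :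
    δ ^ 2 / 2 < Real.log 2 * (1 - binEnt2 ((1 - δ) / 2)) := by
  obtain ⟨hδ0, hδ1⟩ := hδ
  have hlog2 : (0:ℝ) < Real.log 2 := Real.log_pos (by norm_num)
  rcases eq_or_lt_of_le hδ1 with h1 | h1
  · subst h1
    have : binEnt2 0 = 0 := by simp [binEnt2]
    rw [show ((1:ℝ) - 1) / 2 = 0 by norm_num, this]
    have := Real.log_two_gt_d9
    norm_num
    linarith
  · -- 0 < δ < 1
    have hA := aux_A δ hδ0 h1
    have hB := aux_B δ hδ0
    have hsum : δ ^ 2 < (1 - δ) * Real.log (1 - δ) + (1 + δ) * Real.log (1 + δ) := by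
      linarith
    have h1δ : (0:ℝ) < 1 - δ := by linarith
    have h2δ : (0:ℝ) < 1 + δ := by linarith
    have e1 : Real.log ((1 - δ) / 2) = Real.log (1 - δ) - Real.log 2 :=
      Real.log_div (ne_of_gt h1δ) (by norm_num)
    have e2 : (1 : ℝ) - (1 - δ) / 2 = (1 + δ) / 2 := by ring
    have e3 : Real.log ((1 + δ) / 2) = Real.log (1 + δ) - Real.log 2 :=
      Real.log_div (ne_of_gt h2δ) (by norm_num)
    have hne : Real.log 2 ≠ 0 := ne_of_gt hlog2
    have key : Real.log 2 * (1 - binEnt2 ((1 - δ) / 2)) =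
        ((1 - δ) * Real.log (1 - δ) + (1 + δ) * Real.log (1 + δ)) / 2 := by
      rw [binEnt2, Real.logb, Real.logb, e2, e1, e3]
      field_simp
      ring
    rw [key]
    linarith
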